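/- arXiv:1307.6580 — 4 statements merged into one kernel-verified Lean document; each statement's English description precedes it below -/
import Mathlib

section
/- Every element w of the monoid M presented by ⟨x, y, e | e³ = e, xey = y, xe²y = x, xy = 1⟩ can be written as w = p·e^γ·q for some γ ∈ {0, 1, 2}, some left-invertible p ∈ M, and some right-invertible q ∈ M. -/
/-- The alphabet `A = {x, y, e}`. -/
inductive Alpha : Type
  | x | y | e
  deriving DecidableEq

/-- The defining relations `e³ = e`, `xey = y`, `xe²y = x`, `xy = 1`. -/
def rel : FreeMonoid Alpha → FreeMonoid Alpha → Prop := fun a b =>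
  (a = .of .e * .of .e * .of .e ∧ b = .of .e) ∨
  (a = .of .x * .of .e * .of .y ∧ b = .of .y) ∨
  (a = .of .x * .of .e * .of .e * .of .y ∧ b = .of .x) ∨
  (a = .of .x * .of .y ∧ b = 1)

/-- The monoid `M = ⟨x, y, e | e³ = e, xey = y, xe²y = x, xy = 1⟩`. -/
abbrev M := PresentedMonoid rel

/-- The image of `x` in `M`. -/
def X : M := PresentedMonoid.of rel .x
/-- The image of `y` in `M`. -/
def Y : M := PresentedMonoid.of rel .y
/-- The image of `e` in `M`. -/
def E : M := PresentedMonoid.of rel .e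

namespace Stmt11Aux

lemma rel_mk {a b : FreeMonoid Alpha} (h : rel a b) :
    PresentedMonoid.mk rel a = PresentedMonoid.mk rel b :=
  Quotient.sound (ConGen.Rel.of a b h)

lemma r1 : E * E * E = E := rel_mk (Or.inl ⟨rfl, rfl⟩)
lemma r2 : X * E * Y = Y := rel_mk (Or.inr (Or.inl ⟨rfl, rfl⟩))
lemma r3 : X * E * E * Y = X := rel_mk (Or.inr (Or.inr (Or.inl ⟨rfl, rfl⟩)))
lemma r4 : X * Y = 1 := rel_mk (Or.inr (Or.inr (Or.inr ⟨rfl, rfl⟩)))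

lemma r1' (w : M) : E * (E * (E * w)) = E * w := by
  rw [← mul_assoc, ← mul_assoc, r1]
lemma r1b : E * (E * E) = E := by rw [← mul_assoc]; exact r1
lemma r2' : X * (E * Y) = Y := by rw [← mul_assoc]; exact r2
lemma r3' (w : M) : X * (E * (E * (Y * w))) = X * w := by
  rw [← mul_assoc, ← mul_assoc, ← mul_assoc, mul_assoc (X*E*E) Y w, ← mul_assoc, r3]
lemma r3b : X * (E * (E * Y)) = X := by rw [← mul_assoc, ← mul_assoc]; exact r3
lemma r4' (w : M) : X * (Y * w) = w := by rw [← mul_assoc, r4, one_mul]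

/-- The right tail: a product of generators `X * E^δ`. -/
def tail : List ℕ → M
  | [] => 1
  | δ :: L => (X * E ^ δ) * tail L

lemma tail_concat (L : List ℕ) (δ : ℕ) : tail (L ++ [δ]) = tail L * (X * E ^ δ) := by
  induction L with
  | nil => simp [tail]
  | cons a L ih => simp [tail, ih, mul_assoc]

/-- left-invertibility of `E^γ * Y` for `γ ≤ 2`. -/
lemma linv_ey {γ : ℕ} (hγ : γ ≤ 2) : ∃ z : M, z * (E ^ γ * Y) = 1 := by
  interval_cases γ
  · exact ⟨X, by simp [r4]⟩
  · refine ⟨X * X, ?_⟩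
    simp only [pow_one, mul_assoc]
    rw [r2']; exact r4
  · refine ⟨X * (X * E), ?_⟩
    simp only [pow_succ, pow_zero, one_mul, mul_one, mul_assoc]
    rw [r1' Y, r2']; exact r4

/-- right-invertibility of `X * E^δ` for `δ ≤ 2`. -/
lemma rinv_gen {δ : ℕ} (hδ : δ ≤ 2) : ∃ z : M, (X * E ^ δ) * z = 1 := by
  interval_cases δ
  · exact ⟨Y, by simp [r4]⟩
  · refine ⟨E * (Y * Y), ?_⟩
    simp only [pow_one, mul_assoc]
    rw [r3' Y]; exact r4
  · refine ⟨Y * Y, ?_⟩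
    simp only [pow_succ, pow_zero, one_mul, mul_one, mul_assoc]
    rw [r3' Y]; exact r4

lemma rinv_tail {L : List ℕ} (h : ∀ δ ∈ L, δ ≤ 2) : ∃ z : M, tail L * z = 1 := by
  induction L with
  | nil => exact ⟨1, by simp [tail]⟩
  | cons a L ih =>
    obtain ⟨z, hz⟩ := ih (fun δ hδ => h δ (List.mem_cons_of_mem a hδ))
    obtain ⟨g, hg⟩ := rinv_gen (h a List.mem_cons_self)
    refine ⟨z * g, ?_⟩
    calc (X * E ^ a) * tail L * (z * g)
        = X * E ^ a * ((tail L * z) * g) := by simp only [mul_assoc]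
      _ = X * E ^ a * g := by rw [hz, one_mul]
      _ = 1 := hg

def Good (w : M) : Prop :=
  ∃ γ : ℕ, γ ≤ 2 ∧ ∃ p : M, (∃ p', p' * p = 1) ∧
    ∃ L : List ℕ, (∀ δ ∈ L, δ ≤ 2) ∧ w = p * E ^ γ * tail L

lemma good_one : Good 1 :=
  ⟨0, by norm_num, 1, ⟨1, one_mul 1⟩, [], by simp, by simp [tail]⟩

lemma good_mul_X {w : M} (h : Good w) : Good (w * X) := by
  obtain ⟨γ, hγ, p, hp, L, hL, hw⟩ := h
  refine ⟨γ, hγ, p, hp, L ++ [0], ?_, ?_⟩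
  · intro δ hδ
    rcases List.mem_append.1 hδ with h' | h'
    · exact hL δ h'
    · simp at h'; omega
  · rw [hw, tail_concat]
    simp only [pow_zero, mul_one, mul_assoc]

lemma good_mul_E {w : M} (h : Good w) : Good (w * E) := by
  obtain ⟨γ, hγ, p, hp, L, hL, hw⟩ := h
  rcases List.eq_nil_or_concat L with rfl | ⟨L', δ, rfl⟩
  · -- tail is trivial; absorb `E` into the power
    by_cases hγ2 : γ = 2
    · refine ⟨1, by norm_num, p, hp, [], by simp, ?_⟩
      rw [hw, hγ2]
      simp only [tail, pow_succ, pow_zero, pow_one, one_mul, mul_one, mul_assoc]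
      rw [r1b]
    · refine ⟨γ + 1, by omega, p, hp, [], by simp, ?_⟩
      rw [hw]
      simp only [tail, pow_succ, mul_one, mul_assoc]
  · simp only [List.concat_eq_append] at hL hw
    have hδ : δ ≤ 2 := hL δ (by simp)
    have hL' : ∀ d ∈ L', d ≤ 2 := fun d hd => hL d (by simp [hd])
    by_cases hδ2 : δ = 2
    · refine ⟨γ, hγ, p, hp, L' ++ [1], ?_, ?_⟩
      · intro d hd
        rcases List.mem_append.1 hd with h' | h'
        · exact hL' d h'
        · simp at h'; omega
      · rw [hw, hδ2, tail_concat, tail_concat]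
        simp only [pow_succ, pow_zero, pow_one, one_mul, mul_one, mul_assoc]
        rw [r1b]
    · refine ⟨γ, hγ, p, hp, L' ++ [δ + 1], ?_, ?_⟩
      · intro d hd
        rcases List.mem_append.1 hd with h' | h'
        · exact hL' d h'
        · simp at h'; omega
      · rw [hw, tail_concat, tail_concat]
        simp only [pow_succ, mul_assoc]

/-- the key recursion: multiplying `E^γ * tail L` on the right by `Y`. -/
lemma keyY : ∀ L : List ℕ, (∀ δ ∈ L, δ ≤ 2) → ∀ γ : ℕ, γ ≤ 2 →
    ∃ l : M, (∃ l', l' * l = 1) ∧ ∃ γ' : ℕ, γ' ≤ 2 ∧ ∃ L' : List ℕ,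
      (∀ δ ∈ L', δ ≤ 2) ∧ E ^ γ * tail L * Y = l * E ^ γ' * tail L' := by
  intro L
  induction L using List.reverseRecOn with
  | nil =>
    intro _ γ hγ
    exact ⟨E ^ γ * Y, linv_ey hγ, 0, by norm_num, [], by simp, by simp [tail]⟩
  | append_singleton L δ ih =>
    intro hL γ hγ
    have hδ : δ ≤ 2 := hL δ (by simp)
    have hL' : ∀ d ∈ L, d ≤ 2 := fun d hd => hL d (by simp [hd])
    interval_cases δ
    · -- δ = 0 : use X * Y = 1
      refine ⟨1, ⟨1, one_mul 1⟩, γ, hγ, L, hL', ?_⟩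
      rw [tail_concat, one_mul]
      simp only [pow_zero, mul_one, mul_assoc]
      rw [r4, mul_one]
    · -- δ = 1 : use X * E * Y = Y and recurse
      obtain ⟨l, hl, γ', hγ', L', hLs, heq⟩ := ih hL' γ hγ
      refine ⟨l, hl, γ', hγ', L', hLs, ?_⟩
      calc E ^ γ * tail (L ++ [1]) * Y
          = E ^ γ * (tail L * (X * (E * Y))) := by
            rw [tail_concat]; simp only [pow_one, mul_assoc]
        _ = E ^ γ * (tail L * Y) := by rw [r2']
        _ = E ^ γ * tail L * Y := by rw [← mul_assoc]
        _ = l * E ^ γ' * tail L' := heq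
    · -- δ = 2 : use X * E² * Y = X
      refine ⟨1, ⟨1, one_mul 1⟩, γ, hγ, L ++ [0], ?_, ?_⟩
      · intro d hd
        rcases List.mem_append.1 hd with h' | h'
        · exact hL' d h'
        · simp at h'; omega
      · rw [tail_concat, tail_concat, one_mul]
        simp only [pow_succ, pow_zero, one_mul, mul_one, mul_assoc]
        rw [r3b]

lemma good_mul_Y {w : M} (h : Good w) : Good (w * Y) := by
  obtain ⟨γ, hγ, p, ⟨p', hp⟩, L, hL, hw⟩ := h
  obtain ⟨l, ⟨l', hl⟩, γ', hγ', L', hLs, heq⟩ := keyY L hL γ hγ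
  refine ⟨γ', hγ', p * l, ⟨l' * p', ?_⟩, L', hLs, ?_⟩
  · calc l' * p' * (p * l) = l' * ((p' * p) * l) := by simp only [mul_assoc]
      _ = l' * l := by rw [hp, one_mul]
      _ = 1 := hl
  · rw [hw]
    calc p * E ^ γ * tail L * Y
        = p * (E ^ γ * tail L * Y) := by simp only [mul_assoc]
      _ = p * (l * E ^ γ' * tail L') := by rw [heq]
      _ = p * l * E ^ γ' * tail L' := by simp only [mul_assoc]

lemma good_mul_gen (s : Alpha) {w : M} (h : Good w) :
    Good (w * PresentedMonoid.of rel s) := by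
  cases s
  · exact good_mul_X h
  · exact good_mul_Y h
  · exact good_mul_E h

lemma good_all (w : M) : Good w := by
  obtain ⟨a, rfl⟩ := PresentedMonoid.surjective_mk (rels := rel) w
  have key : ∀ a : FreeMonoid Alpha, ∀ w : M, Good w →
      Good (w * PresentedMonoid.mk rel a) := by
    intro a
    induction a using FreeMonoid.inductionOn' with
    | one => intro w hw; simpa using hw
    | of_mul s b ih =>
      intro w hw
      have h' : w * PresentedMonoid.mk rel (FreeMonoid.of s * b)
          = (w * PresentedMonoid.of rel s) * PresentedMonoid.mk rel b := by
        rw [map_mul, ← mul_assoc]; rfl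
      rw [h']
      exact ih _ (good_mul_gen s hw)
  simpa using key a 1 good_one

end Stmt11Aux

/-- Every `w ∈ M` can be written `w = p·e^γ·q` with `γ ∈ {0,1,2}`,
`p` left-invertible and `q` right-invertible. -/
theorem stmt_11 :
    ∀ w : M, ∃ γ : ℕ, γ ≤ 2 ∧ ∃ p q : M,
      (∃ p' : M, p' * p = 1) ∧ (∃ q' : M, q * q' = 1) ∧ w = p * E ^ γ * q := by
  intro w
  obtain ⟨γ, hγ, p, hp, L, hL, hw⟩ := Stmt11Aux.good_all w
  exact ⟨γ, hγ, p, Stmt11Aux.tail L, hp, Stmt11Aux.rinv_tail hL, hw⟩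
end

section
/- Every group homomorphic image of the monoid M presented by ⟨x, y, e | e³ = e, xey = y, xe²y = x, xy = 1⟩ is trivial: for every group G and every monoid homomorphism f : M → G, f(m) = 1 for all m ∈ M. Consequently, the only group congruence on M is the universal congruence M × M. -/
lemma rel_holds {a b : FreeMonoid Alpha} (h : rel a b) :
    PresentedMonoid.mk rel a = PresentedMonoid.mk rel b :=
  Quotient.sound (ConGen.Rel.of a b h)

lemma gen_one {G : Type*} [Group G] (f : M →* G) :
    f X = 1 ∧ f Y = 1 ∧ f E = 1 := by
  set a := f X with ha
  set b := f Y with hb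
  set c := f E with hc
  have h1 : c * c * c = c := by
    have := rel_holds (a := .of .e * .of .e * .of .e) (b := .of .e) (by simp [rel])
    have := congrArg f this
    simpa [ha, hb, hc, X, Y, E, PresentedMonoid.of, map_mul] using this
  have h2 : a * c * b = b := by
    have := rel_holds (a := .of .x * .of .e * .of .y) (b := .of .y) (by simp [rel])
    have := congrArg f this
    simpa [ha, hb, hc, X, Y, E, PresentedMonoid.of, map_mul] using this
  have h3 : a * c * c * b = a := by
    have := rel_holds (a := .of .x * .of .e * .of .e * .of .y) (b := .of .x) (by simp [rel])
    have := congrArg f this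
    simpa [ha, hb, hc, X, Y, E, PresentedMonoid.of, map_mul] using this
  have h4 : a * b = 1 := by
    have := rel_holds (a := .of .x * .of .y) (b := (1 : FreeMonoid Alpha)) (by simp [rel])
    have := congrArg f this
    simpa [ha, hb, hc, X, Y, E, PresentedMonoid.of, map_mul] using this
  have hac : a * c = 1 := mul_right_cancel (b := b) (by rw [h2, one_mul])
  have hcc : c * c = 1 := mul_left_cancel (a := c) (by
    rw [mul_one, ← mul_assoc]; exact h1)
  have hab : a * b = a := by
    calc a * b = a * (c * c) * b := by rw [hcc, mul_one]
    _ = a * c * c * b := by rw [mul_assoc a c c]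
    _ = a := h3
  have ha1 : a = 1 := hab.symm.trans h4
  have hc1 : c = 1 := by rw [ha1, one_mul] at hac; exact hac
  have hb1 : b = 1 := by rw [ha1, one_mul] at h4; exact h4
  exact ⟨ha1, hb1, hc1⟩

lemma part1 : ∀ (G : Type*) [Group G] (f : M →* G) (m : M), f m = 1 := by
    intro G _ f m
    obtain ⟨hx, hy, he⟩ := gen_one f
    refine PresentedMonoid.inductionOn m fun w => ?_
    induction w using FreeMonoid.recOn with
    | one => simp [map_one f]
    | of_mul l u ih =>
      have : f (PresentedMonoid.of rel l) * f (PresentedMonoid.mk rel u) = 1 := by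
        cases l <;> simp [ih, X, Y, E] at hx hy he ⊢ <;> assumption
      simpa [map_mul, PresentedMonoid.of] using this

/-- Every group homomorphic image of `M` is trivial; consequently the only group
congruence on `M` (a congruence whose quotient is a group, i.e. every class is
invertible) is the universal congruence. -/
theorem stmt_12 :
    (∀ (G : Type*) [Group G] (f : M →* G) (m : M), f m = 1) ∧
    (∀ ρ : Con M, (∀ a : M, ∃ b : M, ρ (a * b) 1 ∧ ρ (b * a) 1) → ρ = ⊤) := by
  refine ⟨part1, fun ρ h => ?_⟩
  have hq : ∀ q : ρ.Quotient, ∃ p : ρ.Quotient, p * q = 1 ∧ q * p = 1 := by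
    intro q
    obtain ⟨a, rfl⟩ := ρ.mk'_surjective q
    obtain ⟨b, hb1, hb2⟩ := h a
    exact ⟨ρ.mk' b, by rw [← map_mul, ← map_one ρ.mk']; exact ρ.eq.mpr hb2,
      by rw [← map_mul, ← map_one ρ.mk']; exact ρ.eq.mpr hb1⟩
  letI : Group ρ.Quotient :=
    { (inferInstance : Monoid ρ.Quotient) with
      inv := fun q => Classical.choose (hq q)
      inv_mul_cancel := fun q => (Classical.choose_spec (hq q)).1 }
  have key : ∀ m : M, ρ m 1 := by
    intro m
    have := part1 ρ.Quotient ρ.mk' m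
    rw [← map_one ρ.mk'] at this
    exact ρ.eq.mp this
  refine le_antisymm le_top fun a b _ => ρ.trans (key a) (ρ.symm (key b))
end

section
/- Let ρ be a congruence on the monoid M presented by ⟨x, y, e | e³ = e, xey = y, xe²y = x, xy = 1⟩. If e ρ 1, then ρ is the universal congruence M × M. -/
lemma mrel (a b : FreeMonoid Alpha) (h : rel a b) :
    PresentedMonoid.mk rel a = PresentedMonoid.mk rel b :=
  Quotient.sound (ConGen.Rel.of a b h)

lemma XEY : X * E * Y = Y := mrel _ _ (Or.inr (Or.inl ⟨rfl, rfl⟩))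
lemma XEEY : X * E * E * Y = X := mrel _ _ (Or.inr (Or.inr (Or.inl ⟨rfl, rfl⟩)))
lemma XY : X * Y = 1 := mrel _ _ (Or.inr (Or.inr (Or.inr ⟨rfl, rfl⟩)))

/-- If a congruence on `M` relates `e` and `1`, it is universal. -/
theorem stmt_13 : ∀ ρ : Con M, ρ E 1 → ρ = ⊤ := by
  intro ρ hE
  have hY : ρ Y 1 := by
    have h : ρ (X * E * Y) (X * 1 * Y) := ρ.mul (ρ.mul (ρ.refl X) hE) (ρ.refl Y)
    rw [XEY, mul_one, XY] at h
    exact h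
  have hX : ρ X 1 := by
    have h : ρ (X * E * E * Y) (X * 1 * 1 * Y) :=
      ρ.mul (ρ.mul (ρ.mul (ρ.refl X) hE) hE) (ρ.refl Y)
    rw [XEEY, mul_one, mul_one, XY] at h
    exact h
  have key : ∀ m : M, ρ m 1 := by
    intro m
    induction m using PresentedMonoid.inductionOn with
    | h a =>
      induction a using FreeMonoid.inductionOn' with
      | one => exact ρ.refl 1
      | of_mul b w ih =>
        have hb : ρ (PresentedMonoid.of rel b) 1 := by
          cases b with
          | x => exact hX
          | y => exact hY
          | e => exact hE
        have := ρ.mul hb ih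
        rw [one_mul] at this
        exact this
  refine le_antisymm le_top ?_
  intro a b _
  exact ρ.trans (key a) (ρ.symm (key b))
end

section
/- Let ρ be a congruence on the monoid M presented by ⟨x, y, e | e³ = e, xey = y, xe²y = x, xy = 1⟩. If there exists u ∈ M with u ρ (x⁴·u), then ρ is the universal congruence M × M. -/
namespace Stmt18

lemma rel_sound {a b : FreeMonoid Alpha} (h : rel a b) :
    PresentedMonoid.mk rel a = PresentedMonoid.mk rel b :=
  Quotient.sound (ConGen.Rel.of a b h)

lemma rXY : X * Y = 1 := by
  have h := rel_sound (Or.inr (Or.inr (Or.inr ⟨rfl, rfl⟩)))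
  simpa [X, Y, PresentedMonoid.of, map_mul] using h

lemma rXEY : X * (E * Y) = Y := by
  have h := rel_sound (Or.inr (Or.inl ⟨rfl, rfl⟩))
  simpa [X, Y, E, PresentedMonoid.of, map_mul, mul_assoc] using h

lemma rXEEY : X * (E * (E * Y)) = X := by
  have h := rel_sound (Or.inr (Or.inr (Or.inl ⟨rfl, rfl⟩)))
  simpa [X, Y, E, PresentedMonoid.of, map_mul, mul_assoc] using h

lemma rE3 : E * (E * E) = E := by
  have h := rel_sound (Or.inl ⟨rfl, rfl⟩)
  simpa [E, PresentedMonoid.of, map_mul, mul_assoc] using h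

lemma rXY' (z : M) : X * (Y * z) = z := by
  rw [← mul_assoc, rXY, one_mul]

lemma rXEY' (z : M) : X * (E * (Y * z)) = Y * z := by
  rw [show E * (Y * z) = (E * Y) * z by rw [mul_assoc], ← mul_assoc, rXEY]

lemma rXEEY' (z : M) : X * (E * (E * (Y * z))) = X * z := by
  have : E * (E * (Y * z)) = (E * (E * Y)) * z := by rw [mul_assoc, mul_assoc]
  rw [this, ← mul_assoc, rXEEY]

lemma rE3' (z : M) : E * (E * (E * z)) = E * z := by
  have : E * (E * (E * z)) = (E * (E * E)) * z := by rw [mul_assoc, mul_assoc]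
  rw [this, rE3]

lemma pow_cancel : ∀ a : ℕ, X ^ a * Y ^ a = 1
  | 0 => by simp
  | (a + 1) => by
      rw [pow_succ, pow_succ']
      rw [mul_assoc, rXY' (Y ^ a), pow_cancel a]

lemma key2 (a : ℕ) : X ^ (a + 2) * (E * Y) = X ^ a := by
  have h2 : X ^ 2 * (E * Y) = 1 := by
    rw [pow_two, mul_assoc, rXEY, rXY]
  rw [pow_add, mul_assoc, h2, mul_one]

/-- Special forms: `x^a` and `e^c y·s` for `c ∈ {0,1,2}`. -/
inductive Sp : Type
  | pow : ℕ → Sp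
  | c0 : Sp → Sp
  | c1 : Sp → Sp
  | c2 : Sp → Sp

/-- Interpretation of special forms in `M`. -/
def sig : Sp → M
  | .pow a => X ^ a
  | .c0 s => Y * sig s
  | .c1 s => E * (Y * sig s)
  | .c2 s => E * (E * (Y * sig s))

lemma lemX : ∀ s : Sp, ∃ s' : Sp, X * sig s = sig s'
  | .pow a => ⟨.pow (a + 1), by rw [sig, sig, pow_succ']⟩
  | .c0 s => ⟨s, by rw [sig, rXY']⟩
  | .c1 s => ⟨.c0 s, by rw [sig, sig, rXEY']⟩
  | .c2 s => by
      obtain ⟨s', hs'⟩ := lemX s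
      exact ⟨s', by rw [sig, rXEEY', hs']⟩

lemma complete (v : FreeMonoid Alpha) :
    ∃ (w : M) (s : Sp), PresentedMonoid.mk rel v * w = sig s := by
  induction v using FreeMonoid.inductionOn' with
  | one => exact ⟨1, .pow 0, by simp [sig]⟩
  | of_mul g v ih =>
    obtain ⟨w, s, hw⟩ := ih
    have hmk : PresentedMonoid.mk rel (.of g * v) * w
        = PresentedMonoid.of rel g * (PresentedMonoid.mk rel v * w) := by
      rw [map_mul, mul_assoc]; rfl
    cases g with
    | x =>
      obtain ⟨s', hs'⟩ := lemX s
      exact ⟨w, s', by rw [hmk, hw]; exact hs'⟩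
    | y =>
      exact ⟨w, .c0 s, by rw [hmk, hw]; rfl⟩
    | e =>
      cases s with
      | pow a =>
        refine ⟨w * (Y ^ a * Y), .c1 (.pow 0), ?_⟩
        have hE : PresentedMonoid.mk rel (.of .e * v) = E * PresentedMonoid.mk rel v := by
          rw [map_mul]; rfl
        rw [hE, mul_assoc, ← mul_assoc (PresentedMonoid.mk rel v) w, hw, sig,
          ← mul_assoc (X ^ a) (Y ^ a) Y, pow_cancel a, one_mul]
        simp [sig]
      | c0 s' =>
        exact ⟨w, .c1 s', by rw [hmk, hw]; rfl⟩
      | c1 s' =>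
        exact ⟨w, .c2 s', by rw [hmk, hw]; rfl⟩
      | c2 s' =>
        refine ⟨w, .c1 s', ?_⟩
        rw [hmk, hw]
        show E * (E * (E * (Y * sig s'))) = E * (Y * sig s')
        exact rE3' _
  
lemma extract : ∀ s : Sp, ∃ m a : ℕ, X ^ m * sig s = X ^ a
  | .pow a => ⟨0, a, by rw [pow_zero, one_mul, sig]⟩
  | .c0 s => by
      obtain ⟨m, a, h⟩ := extract s
      refine ⟨m + 1, a, ?_⟩
      rw [sig, pow_succ, mul_assoc, rXY', h]
  | .c1 s => by
      obtain ⟨m, a, h⟩ := extract s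
      refine ⟨m + 2, a, ?_⟩
      rw [sig, show m + 2 = m + 1 + 1 by omega, pow_succ, mul_assoc, rXEY',
        pow_succ, mul_assoc, rXY', h]
  | .c2 s => by
      obtain ⟨m, a, h⟩ := extract s
      refine ⟨m + 1, a + 1, ?_⟩
      rw [sig, pow_succ, mul_assoc, rXEEY', ← mul_assoc, ← pow_succ, pow_succ',
        mul_assoc, h, ← pow_succ']

lemma descent (ρ : Con M) : ∀ a : ℕ, ρ (X ^ a) (X ^ (a + 4)) → ρ 1 (X ^ 4) := by
  intro a
  induction a using Nat.strong_induction_on with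
  | _ a ih =>
    match a with
    | 0 => intro h; simpa using h
    | 1 =>
      intro h
      have h2 := ρ.mul h (ρ.refl (E * Y))
      rw [pow_one, rXEY, show (1:ℕ) + 4 = 3 + 2 by omega, key2] at h2
      have h3 := ρ.mul (ρ.refl X) h2
      rw [rXY, ← pow_succ'] at h3
      exact h3
    | (a + 2) =>
      intro h
      have h2 := ρ.mul h (ρ.refl (E * Y))
      rw [key2, show a + 2 + 4 = a + 4 + 2 by omega, key2] at h2
      exact ih a (by omega) h2

lemma gen_rel (ρ : Con M) (h0 : ρ 1 (X ^ 4)) : ρ 1 X ∧ ρ 1 Y ∧ ρ 1 E := by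
  have hA : X ^ 4 * (E * Y) = X ^ 2 := key2 2
  have hB : X ^ 4 * (E * (E * Y)) = X ^ 4 := by
    rw [show (4:ℕ) = 3 + 1 by omega, pow_succ, mul_assoc, rXEEY, ← pow_succ]
  have h1 : ρ (E * Y) (X ^ 2) := by
    have := ρ.mul h0 (ρ.refl (E * Y)); rwa [one_mul, hA] at this
  have h2 : ρ (E * (E * Y)) 1 := by
    have := ρ.mul h0 (ρ.refl (E * (E * Y)))
    rw [one_mul, hB] at this
    exact ρ.trans this (ρ.symm h0)
  have h3 : ρ (E * Y) E := by
    have := ρ.mul (ρ.refl E) h2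
    rwa [rE3' Y, mul_one] at this
  have h4 : ρ E (X ^ 2) := ρ.trans (ρ.symm h3) h1
  have h5 : ρ (E * (Y * Y)) 1 := by
    have := ρ.mul h4 (ρ.refl (Y * Y))
    rwa [pow_two, mul_assoc, rXY' Y, rXY] at this
  have h6 : ρ (E * (Y * Y)) (E * Y) := by
    have := ρ.mul h3 (ρ.refl Y)
    rwa [mul_assoc] at this
  have h7 : ρ 1 (E * Y) := ρ.trans (ρ.symm h5) h6
  have h8 : ρ 1 E := ρ.trans h7 h3
  have h9 : ρ Y (E * Y) := by
    have := ρ.mul h8 (ρ.refl Y); rwa [one_mul] at this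
  have h10 : ρ Y 1 := ρ.trans h9 (ρ.symm h7)
  have h11 : ρ 1 X := by
    have := ρ.mul (ρ.refl X) h10; rwa [rXY, mul_one] at this
  exact ⟨h11, ρ.symm h10, h8⟩

end Stmt18

open Stmt18 in
/-- If some `u ∈ M` satisfies `u ρ x⁴·u`, then `ρ` is universal. -/
theorem stmt_18 : ∀ ρ : Con M, (∃ u : M, ρ u (X ^ 4 * u)) → ρ = ⊤ := by
  intro ρ ⟨u, h⟩
  -- produce ρ (X^a) (X^(a+4))
  obtain ⟨v, rfl⟩ := PresentedMonoid.surjective_mk (rels := rel) u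
  obtain ⟨w, s, hw⟩ := complete v
  obtain ⟨m, a, he⟩ := extract s
  set u : M := PresentedMonoid.mk rel v with hu
  have key : X ^ m * (u * w) = X ^ a := by rw [hw]; exact he
  have hρ : ρ (X ^ m * (u * w)) (X ^ m * ((X ^ 4 * u) * w)) :=
    ρ.mul (ρ.refl (X ^ m)) (ρ.mul h (ρ.refl w))
  have hr : X ^ m * ((X ^ 4 * u) * w) = X ^ (a + 4) := by
    rw [show (X ^ 4 * u) * w = X ^ 4 * (u * w) by rw [mul_assoc], ← mul_assoc,
      ← pow_add, show m + 4 = 4 + m by omega, pow_add, mul_assoc, key, ← pow_add,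
      show (4 : ℕ) + a = a + 4 by omega]
  rw [key, hr] at hρ
  have h0 : ρ 1 (X ^ 4) := descent ρ a hρ
  obtain ⟨hx, hy, he'⟩ := gen_rel ρ h0
  have hall : ∀ m : M, ρ 1 m := by
    intro m
    induction m using PresentedMonoid.inductionOn with
    | _ b =>
      induction b using FreeMonoid.inductionOn' with
      | one => exact ρ.refl 1
      | of_mul g v ih =>
        have hg : ρ 1 (PresentedMonoid.of rel g) := by
          cases g with
          | x => exact hx
          | y => exact hy
          | e => exact he'
        have := ρ.mul hg ih
        rwa [one_mul, show PresentedMonoid.of rel g * PresentedMonoid.mk rel v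
          = PresentedMonoid.mk rel (.of g * v) from (map_mul _ _ _).symm] at this
  rw [eq_top_iff]
  intro a b _
  exact ρ.trans (ρ.symm (hall a)) (hall b)
end
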